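/- arXiv:2210.12046 — 3 statements merged into one kernel-verified Lean document; each statement's English description precedes it below -/
import Mathlib

section
/- Let (a_n) be a sequence of elements of ℚ̄ and C > 0 a real number such that: for every n ≥ 1 and every 0 ≤ k ≤ n, every complex root of the minimal polynomial of a_k over ℚ has absolute value at most Cⁿ; and for every n ≥ 1 there is a positive integer d ≤ Cⁿ such that d·a₀,…,d·a_n are all algebraic integers. Suppose the power series g(z) = ∑_{n≥0} a_n zⁿ converges for every z ∈ ℂ (so g is entire) and that g satisfies a nontrivial linear differential equation ∑_{j=0}^m p_j(z) g^{(j)}(z) = 0 for all z ∈ ℂ with p₀,…,p_m ∈ ℚ̄[z] not all zero. Then g is a polynomial, i.e., a_n = 0 for all sufficiently large n. -/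
open scoped BigOperators

noncomputable section

open FormalMultilinearSeries Polynomial

private lemma hasFPS_of_hasSum {c : ℕ → ℂ} {f : ℂ → ℂ}
    (h : ∀ z : ℂ, HasSum (fun n : ℕ => c n * z ^ n) (f z)) :
    HasFPowerSeriesOnBall f (ofScalars ℂ c) 0 ⊤ := by
  have hsum : ∀ r : NNReal, Summable fun n : ℕ => ‖ofScalars ℂ c n‖ * (r : ℝ) ^ n := by
    intro r
    have h1 := (h ((r : ℝ) : ℂ)).summable
    rw [← summable_norm_iff] at h1
    refine h1.congr fun n => ?_
    rw [ofScalars_norm, norm_mul, norm_pow]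
    simp
  refine ⟨?_, ?_, ?_⟩
  · rw [radius_eq_top_of_summable_norm _ hsum]
  · exact ENNReal.zero_lt_top
  · intro y _
    have := h y
    simp only [ofScalars_apply_eq, smul_eq_mul, zero_add]
    exact this

private lemma coeff_zero_of_hasSum_zero {c : ℕ → ℂ}
    (h : ∀ z : ℂ, HasSum (fun n : ℕ => c n * z ^ n) 0) (n : ℕ) : c n = 0 := by
  have h0 := (hasFPS_of_hasSum (f := fun _ => (0 : ℂ)) h).hasFPowerSeriesAt.eq_zero
  have h2 : ofScalars ℂ c n = 0 := by rw [h0]; rfl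
  rwa [ofScalars_eq_zero] at h2

private lemma hasSum_deriv {c : ℕ → ℂ} {f : ℂ → ℂ}
    (h : ∀ z : ℂ, HasSum (fun n : ℕ => c n * z ^ n) (f z)) (z : ℂ) :
    HasSum (fun n : ℕ => ((n : ℂ) + 1) * c (n + 1) * z ^ n) (deriv f z) := by
  have H := (hasFPS_of_hasSum h).fderiv
  have hz : z ∈ Metric.eball (0 : ℂ) ⊤ := by simp
  have H2 := H.hasSum hz
  have H3 := (ContinuousLinearMap.apply ℂ ℂ (1 : ℂ)).hasSum H2
  have key : ∀ n : ℕ, (ContinuousLinearMap.apply ℂ ℂ (1 : ℂ))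
      ((ofScalars ℂ c).derivSeries n fun _ => z)
      = ((n : ℂ) + 1) * c (n + 1) * z ^ n := by
    intro n
    have e1 : (fun _ : Fin n => z) = fun _ : Fin n => z • (1 : ℂ) := by simp
    rw [e1, ContinuousMultilinearMap.map_smul_univ]
    simp only [Finset.prod_const, Finset.card_univ, Fintype.card_fin,
      ContinuousLinearMap.apply_apply, ContinuousLinearMap.smul_apply, smul_eq_mul]
    have e2 := derivSeries_apply_diag (ofScalars ℂ c) n (1 : ℂ)
    rw [e2, ofScalars_apply_eq]
    simp [smul_eq_mul]
    ring
  rw [funext key] at H3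
  simp only [ContinuousLinearMap.apply_apply, zero_add, fderiv_apply_one_eq_deriv] at H3
  exact H3

private def ff (j n : ℕ) : ℕ := ∏ i ∈ Finset.range j, (n + i + 1)

private lemma hasSum_iteratedDeriv {a : ℕ → ℂ} {g : ℂ → ℂ}
    (hg : ∀ z : ℂ, HasSum (fun n : ℕ => a n * z ^ n) (g z)) :
    ∀ (j : ℕ) (z : ℂ),
      HasSum (fun n : ℕ => (ff j n : ℂ) * a (n + j) * z ^ n) (iteratedDeriv j g z) := by
  intro j
  induction j with
  | zero =>
    intro z
    simpa [ff] using hg z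
  | succ j ih =>
    intro z
    have H := hasSum_deriv (c := fun n => (ff j n : ℂ) * a (n + j)) (f := iteratedDeriv j g) ih z
    rw [iteratedDeriv_succ]
    refine H.congr_fun fun n => ?_
    have e : ff (j + 1) n = (n + 1) * ff j (n + 1) := by
      rw [ff, ff, Finset.prod_range_succ', mul_comm]
      congr 1
      exact Finset.prod_congr rfl fun i _ => by omega
    rw [show n + 1 + j = n + (j + 1) from by omega, e]
    push_cast
    ring

private lemma recurrence {a : ℕ → ℂ} {g : ℂ → ℂ}
    (hg : ∀ z : ℂ, HasSum (fun n : ℕ => a n * z ^ n) (g z))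
    {m K : ℕ} {p : ℕ → Polynomial ℂ}
    (hK : ∀ j ∈ Finset.range (m + 1), (p j).natDegree < K + 1)
    (hode : ∀ z : ℂ, ∑ j ∈ Finset.range (m + 1), (p j).eval z * iteratedDeriv j g z = 0)
    (N : ℕ) :
    ∑ j ∈ Finset.range (m + 1), ∑ k ∈ Finset.range (K + 1),
      (if k ≤ N then (p j).coeff k * (ff j (N - k) : ℂ) * a (N - k + j) else 0) = 0 := by
  refine coeff_zero_of_hasSum_zero (c := fun N => ∑ j ∈ Finset.range (m + 1),
    ∑ k ∈ Finset.range (K + 1),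
      (if k ≤ N then (p j).coeff k * (ff j (N - k) : ℂ) * a (N - k + j) else 0))
    (fun z => ?_) N
  -- individual HasSum for each (j,k)
  have hjk : ∀ j ∈ Finset.range (m + 1), ∀ k ∈ Finset.range (K + 1),
      HasSum (fun N : ℕ =>
        (if k ≤ N then (p j).coeff k * (ff j (N - k) : ℂ) * a (N - k + j) else 0) * z ^ N)
        ((p j).coeff k * z ^ k * iteratedDeriv j g z) := by
    intro j _ k _
    have base := (hasSum_iteratedDeriv hg j z).mul_left ((p j).coeff k * z ^ k)
    set F : ℕ → ℂ := fun N =>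
      (if k ≤ N then (p j).coeff k * (ff j (N - k) : ℂ) * a (N - k + j) else 0) * z ^ N with hF
    have e1 : (fun n : ℕ => F (n + k)) =
        fun n : ℕ => (p j).coeff k * z ^ k * ((ff j n : ℂ) * a (n + j) * z ^ n) := by
      funext n
      have : k ≤ n + k := Nat.le_add_left _ _
      simp only [hF, this, if_pos, Nat.add_sub_cancel]
      rw [pow_add]
      ring
    have e2 : ∑ i ∈ Finset.range k, F i = 0 := by
      apply Finset.sum_eq_zero
      intro i hi
      have : ¬ k ≤ i := by simpa using Finset.mem_range.mp hi
      simp [hF, this]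
    have h2 : HasSum (fun n : ℕ => F (n + k)) ((p j).coeff k * z ^ k * iteratedDeriv j g z) := by
      rw [e1]; exact base
    have h3 := (hasSum_nat_add_iff (f := F) k).mp h2
    rwa [e2, add_zero] at h3
  have hjsum : ∀ j ∈ Finset.range (m + 1),
      HasSum (fun N : ℕ => ∑ k ∈ Finset.range (K + 1),
        (if k ≤ N then (p j).coeff k * (ff j (N - k) : ℂ) * a (N - k + j) else 0) * z ^ N)
        ((p j).eval z * iteratedDeriv j g z) := by
    intro j hj
    have := hasSum_sum (f := fun k N =>
        (if k ≤ N then (p j).coeff k * (ff j (N - k) : ℂ) * a (N - k + j) else 0) * z ^ N)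
      (a := fun k => (p j).coeff k * z ^ k * iteratedDeriv j g z)
      (s := Finset.range (K + 1)) (hjk j hj)
    have e : (p j).eval z * iteratedDeriv j g z
        = ∑ k ∈ Finset.range (K + 1), (p j).coeff k * z ^ k * iteratedDeriv j g z := by
      rw [eval_eq_sum_range' (hK j hj), Finset.sum_mul]
    rw [e]; exact this
  have htot := hasSum_sum (s := Finset.range (m + 1)) hjsum
  rw [hode z] at htot
  refine htot.congr_fun fun N => ?_
  rw [Finset.sum_mul]
  exact Finset.sum_congr rfl fun j _ => by rw [Finset.sum_mul]

private lemma multiset_prod_le {B : ℝ} (hB : 1 ≤ B) (s : Multiset ℂ)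
    (h : ∀ r ∈ s, ‖r‖ ≤ B) :
    (s.map (‖·‖)).prod ≤ B ^ Multiset.card s := by
  induction s using Multiset.induction with
  | empty => simp
  | cons x s ih =>
    rw [Multiset.map_cons, Multiset.prod_cons, Multiset.card_cons, pow_succ]
    have h1 : ‖x‖ ≤ B := h x (Multiset.mem_cons_self x s)
    have h2 : (s.map (‖·‖)).prod ≤ B ^ Multiset.card s :=
      ih fun r hr => h r (Multiset.mem_cons_of_mem hr)
    have h3 : (0:ℝ) ≤ (s.map (‖·‖)).prod := by
      apply Multiset.prod_nonneg
      intro x hx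
      obtain ⟨y, _, rfl⟩ := Multiset.mem_map.mp hx
      exact norm_nonneg _
    calc ‖x‖ * (s.map (‖·‖)).prod
        ≤ B * (B ^ Multiset.card s) := by
          apply mul_le_mul h1 h2 h3 (le_trans zero_le_one hB)
      _ = B ^ Multiset.card s * B := mul_comm _ _

private lemma key_bound {x : ℂ} (hx : x ≠ 0) (d : ℕ) (hd : 0 < d)
    (hint : IsIntegral ℤ ((d : ℂ) * x)) {B : ℝ} (hB : 1 ≤ B)
    (hroots : ∀ z : ℂ, (Polynomial.aeval z) (minpoly ℚ x) = 0 → ‖z‖ ≤ B)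
    {D : ℕ} (hD : (minpoly ℚ ((d : ℂ) * x)).natDegree ≤ D) :
    1 ≤ (d : ℝ) * ‖x‖ * ((d : ℝ) * B) ^ (D - 1) := by
  set y : ℂ := (d : ℂ) * x with hy
  have hdC : (d : ℂ) ≠ 0 := Nat.cast_ne_zero.mpr hd.ne'
  have hyne : y ≠ 0 := mul_ne_zero hdC hx
  have hyQ : IsIntegral ℚ y := hint.tower_top
  set P : ℚ[X] := minpoly ℚ y with hP
  have hPmonic : P.Monic := minpoly.monic hyQ
  set Q : ℂ[X] := P.map (algebraMap ℚ ℂ) with hQ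
  have hQmonic : Q.Monic := hPmonic.map _
  have hQne : Q ≠ 0 := hQmonic.ne_zero
  have hQdeg : Q.natDegree = P.natDegree := P.natDegree_map_eq_of_injective
    (algebraMap ℚ ℂ).injective
  have hQsplits : Q.Splits := IsAlgClosed.splits _
  have hcard : Multiset.card Q.roots = P.natDegree := by
    rw [← hQdeg]; exact (splits_iff_card_roots).mp hQsplits
  -- each root of Q is bounded by d * B
  have hroot_bound : ∀ r ∈ Q.roots, ‖r‖ ≤ (d : ℝ) * B := by
    intro r hr
    have hr0 : aeval r P = 0 := by
      have h' := (mem_roots hQne).mp hr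
      rwa [IsRoot.def, hQ, eval_map, ← aeval_def] at h'
    -- P divides scaleRoots (minpoly ℚ x) d
    have hdvd : P ∣ (minpoly ℚ x).scaleRoots (d : ℚ) := by
      apply minpoly.dvd
      have := scaleRoots_aeval_eq_zero (A := ℂ) (r := (d : ℚ)) (minpoly.aeval ℚ x)
      rwa [map_natCast] at this
    have hrs : aeval r ((minpoly ℚ x).scaleRoots (d : ℚ)) = 0 := by
      obtain ⟨h, hh⟩ := hdvd
      rw [hh, map_mul, hr0, zero_mul]
    have hev : aeval (r / (d : ℂ)) (minpoly ℚ x) = 0 := by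
      have key := scaleRoots_eval₂_mul (algebraMap ℚ ℂ) (r / (d : ℂ)) ((d : ℚ))
        (p := minpoly ℚ x)
      rw [map_natCast] at key
      rw [mul_div_cancel₀ _ hdC] at key
      rw [aeval_def] at hrs
      rw [hrs] at key
      have hpow : ((d : ℂ)) ^ (minpoly ℚ x).natDegree ≠ 0 := pow_ne_zero _ hdC
      have := (mul_eq_zero.mp key.symm).resolve_left hpow
      rwa [aeval_def]
    have := hroots _ hev
    rw [norm_div, Complex.norm_natCast] at this
    calc ‖r‖ = (d : ℝ) * (‖r‖ / (d : ℝ)) := by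
          field_simp
      _ ≤ (d : ℝ) * B := by
          apply mul_le_mul_of_nonneg_left this (Nat.cast_nonneg d)
  -- y is a root
  have hymem : y ∈ Q.roots := by
    rw [mem_roots hQne]
    rw [IsRoot.def, hQ, eval_map, ← aeval_def]
    exact minpoly.aeval ℚ y
  -- lower bound: product of |roots| ≥ 1
  have hprod_eq : ‖(Q.eval 0)‖ = (Q.roots.map (‖·‖)).prod := by
    have hQfac : Q.eval 0 = (Q.roots.map fun r => -r).prod := by
      conv_lhs => rw [hQsplits.eq_prod_roots_of_monic hQmonic]
      rw [eval_multiset_prod, Multiset.map_map]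
      congr 1
      apply Multiset.map_congr rfl
      intro r _
      simp
    rw [hQfac, ← normHom_apply, map_multiset_prod, Multiset.map_map]
    congr 1
    apply Multiset.map_congr rfl
    intro r _
    simp
  have hlow : 1 ≤ (Q.roots.map (‖·‖)).prod := by
    rw [← hprod_eq]
    have hc0 : P.coeff 0 ≠ 0 := minpoly.coeff_zero_ne_zero hyQ hyne
    have hPint : P = (minpoly ℤ y).map (algebraMap ℤ ℚ) :=
      minpoly.isIntegrallyClosed_eq_field_fractions ℚ ℂ hint
    have he : P.coeff 0 = ((minpoly ℤ y).coeff 0 : ℚ) := by rw [hPint, coeff_map]; rfl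
    have heZ : (minpoly ℤ y).coeff 0 ≠ 0 := by
      intro h; rw [he, h] at hc0; exact hc0 (by norm_num)
    have h1 : (1 : ℚ) ≤ |P.coeff 0| := by
      rw [he]
      exact_mod_cast Int.one_le_abs heZ
    have : Q.eval 0 = ((P.coeff 0 : ℚ) : ℂ) := by
      rw [← coeff_zero_eq_eval_zero, hQ, coeff_map]; rfl
    rw [this]
    calc (1 : ℝ) ≤ |(P.coeff 0 : ℚ)| := by exact_mod_cast h1
      _ = ‖((P.coeff 0 : ℚ) : ℂ)‖ := by
          rw [Complex.norm_ratCast, Rat.cast_abs]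
  -- split off y
  have hdB : (1 : ℝ) ≤ (d : ℝ) * B := by
    calc (1 : ℝ) = 1 * 1 := by ring
      _ ≤ (d : ℝ) * B := mul_le_mul (by exact_mod_cast hd) hB zero_le_one (Nat.cast_nonneg d)
  have hsplit : Q.roots = y ::ₘ Q.roots.erase y := (Multiset.cons_erase hymem).symm
  have herase_card : Multiset.card (Q.roots.erase y) = P.natDegree - 1 := by
    rw [Multiset.card_erase_of_mem hymem, hcard]; rfl
  have herase_bound : (Multiset.map (‖·‖) (Q.roots.erase y)).prod
      ≤ ((d : ℝ) * B) ^ (D - 1) := by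
    calc (Multiset.map (‖·‖) (Q.roots.erase y)).prod
        ≤ ((d : ℝ) * B) ^ (Multiset.card (Q.roots.erase y)) :=
          multiset_prod_le hdB _ (fun r hr => hroot_bound r (Multiset.mem_of_mem_erase hr))
      _ ≤ ((d : ℝ) * B) ^ (D - 1) := by
          apply pow_le_pow_right₀ hdB
          rw [herase_card]
          omega
  have habsy : ‖y‖ = (d : ℝ) * ‖x‖ := by
    rw [hy, norm_mul, Complex.norm_natCast]
  calc (1:ℝ) ≤ (Q.roots.map (‖·‖)).prod := hlow
    _ = ‖y‖ * (Multiset.map (‖·‖) (Q.roots.erase y)).prod := by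
        rw [hsplit]; simp
    _ ≤ ‖y‖ * ((d : ℝ) * B) ^ (D - 1) := by
        apply mul_le_mul_of_nonneg_left herase_bound (norm_nonneg _)
    _ = (d : ℝ) * ‖x‖ * ((d : ℝ) * B) ^ (D - 1) := by rw [habsy]

/-- An entire G-series (a power series with algebraic coefficients satisfying the G-function
growth and denominator conditions, converging on all of `ℂ`) which is holonomic over
`ℚ̄[z]` is a polynomial. -/
theorem entire_G_series_is_polynomial (a : ℕ → ℂ) (halg : ∀ n, IsAlgebraic ℚ (a n))
    (C : ℝ) (hC : 0 < C)
    (hconj : ∀ n : ℕ, 1 ≤ n → ∀ k ≤ n, ∀ z : ℂ,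
      (Polynomial.aeval z) (minpoly ℚ (a k)) = 0 → ‖z‖ ≤ C ^ n)
    (hden : ∀ n : ℕ, 1 ≤ n → ∃ d : ℕ, 0 < d ∧ (d : ℝ) ≤ C ^ n ∧
      ∀ k ≤ n, IsIntegral ℤ ((d : ℂ) * a k))
    (g : ℂ → ℂ) (hg : ∀ z : ℂ, HasSum (fun n : ℕ => a n * z ^ n) (g z))
    (m : ℕ) (p : ℕ → Polynomial ℂ)
    (hpalg : ∀ j k, IsAlgebraic ℚ ((p j).coeff k))
    (hpne : ∃ j ≤ m, p j ≠ 0)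
    (hode : ∀ z : ℂ, ∑ j ∈ Finset.range (m + 1), (p j).eval z * iteratedDeriv j g z = 0) :
    ∃ N : ℕ, ∀ n ≥ N, a n = 0 := by
  classical
  -- degree bound for the polynomials
  set K := (Finset.range (m + 1)).sup (fun j => (p j).natDegree) with hKdef
  have hK : ∀ j ∈ Finset.range (m + 1), (p j).natDegree < K + 1 :=
    fun j hj => Nat.lt_succ_of_le (Finset.le_sup (f := fun j => (p j).natDegree) hj)
  have hq := recurrence hg hK hode
  set box : Finset (ℕ × ℕ) := (Finset.range (m + 1)) ×ˢ (Finset.range (K + 1)) with hbox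
  set T : Finset (ℕ × ℕ) := box.filter (fun jk => (p jk.1).coeff jk.2 ≠ 0) with hT
  have hTne : T.Nonempty := by
    obtain ⟨j, hj, hpj⟩ := hpne
    have hjr : j ∈ Finset.range (m + 1) := Finset.mem_range.mpr (Nat.lt_succ_of_le hj)
    refine ⟨(j, (p j).natDegree), ?_⟩
    rw [hT, Finset.mem_filter]
    refine ⟨?_, ?_⟩
    · rw [hbox, Finset.mem_product]
      exact ⟨hjr, Finset.mem_range.mpr (Nat.lt_succ_of_le
        (Finset.le_sup (f := fun j => (p j).natDegree) hjr))⟩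
    · simpa [coeff_natDegree] using leadingCoeff_ne_zero.mpr hpj
  obtain ⟨jkv, hjkv, hjkvmax⟩ := T.exists_max_image (fun jk => (jk.1 : ℤ) - jk.2) hTne
  set v : ℤ := (jkv.1 : ℤ) - jkv.2 with hv
  set T' : Finset (ℕ × ℕ) := T.filter (fun jk => (jk.1 : ℤ) - jk.2 = v) with hT'
  have hT'ne : T'.Nonempty := ⟨jkv, Finset.mem_filter.mpr ⟨hjkv, rfl⟩⟩
  obtain ⟨jk₀, hjk₀, hT'le⟩ := T'.exists_max_image Prod.fst hT'ne
  -- basic facts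
  have hT'T : T' ⊆ T := Finset.filter_subset _ _
  have hTbox : T ⊆ box := Finset.filter_subset _ _
  have hT'box : T' ⊆ box := hT'T.trans hTbox
  have hboxmem : ∀ jk ∈ box, jk.1 ≤ m ∧ jk.2 ≤ K := by
    intro jk hjk
    rw [hbox, Finset.mem_product] at hjk
    exact ⟨Nat.lt_succ_iff.mp (Finset.mem_range.mp hjk.1),
      Nat.lt_succ_iff.mp (Finset.mem_range.mp hjk.2)⟩
  have hT'v : ∀ jk ∈ T', (jk.1 : ℤ) - jk.2 = v := fun jk hjk =>
    (Finset.mem_filter.mp hjk).2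
  have hTv : ∀ jk ∈ T, (jk.1 : ℤ) - jk.2 ≤ v := hjkvmax
  have huniq : ∀ jk ∈ T', ∀ jk' ∈ T', jk.1 = jk'.1 → jk = jk' := by
    intro jk hjk jk' hjk' he
    have h1 := hT'v jk hjk
    have h2 := hT'v jk' hjk'
    have : jk.2 = jk'.2 := by omega
    exact Prod.ext he this
  have hcoeff0 : (p jk₀.1).coeff jk₀.2 ≠ 0 := (Finset.mem_filter.mp (hT'T hjk₀)).2
  -- the polynomial W whose values are the leading coefficients of the recurrence
  set W : Polynomial ℂ := ∑ jk ∈ T', Polynomial.C ((p jk.1).coeff jk.2) *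
      ∏ i ∈ Finset.range jk.1, (Polynomial.X + Polynomial.C ((i : ℂ) + 1 - (jk.2 : ℂ)))
      with hW
  have hPrM : ∀ jk : ℕ × ℕ,
      (∏ i ∈ Finset.range jk.1, (X + Polynomial.C ((i : ℂ) + 1 - (jk.2 : ℂ)))).Monic :=
    fun jk => monic_prod_of_monic _ _ fun i _ => monic_X_add_C _
  have hPrD : ∀ jk : ℕ × ℕ,
      (∏ i ∈ Finset.range jk.1, (X + Polynomial.C ((i : ℂ) + 1 - (jk.2 : ℂ)))).natDegree
        = jk.1 := by
    intro jk
    rw [natDegree_prod_of_monic _ _ fun i _ => monic_X_add_C _]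
    simp only [natDegree_X_add_C]
    simp
  have hWc : W.coeff jk₀.1 = (p jk₀.1).coeff jk₀.2 := by
    have h1 : ∀ b ∈ T', b ≠ jk₀ → (Polynomial.C ((p b.1).coeff b.2) *
        ∏ i ∈ Finset.range b.1, (X + Polynomial.C ((i : ℂ) + 1 - (b.2 : ℂ)))).coeff jk₀.1
        = 0 := by
      intro b hb hne
      have hlt : b.1 < jk₀.1 := by
        have hle := hT'le b hb
        rcases Nat.lt_or_ge b.1 jk₀.1 with h | h
        · exact h
        · exact absurd (huniq b hb jk₀ hjk₀ (by omega)) hne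
      have hz : (∏ i ∈ Finset.range b.1,
          (X + Polynomial.C ((i : ℂ) + 1 - (b.2 : ℂ)))).coeff jk₀.1 = 0 := by
        apply coeff_eq_zero_of_natDegree_lt
        rw [hPrD b]
        exact hlt
      rw [coeff_C_mul, hz, mul_zero]
    rw [hW, finset_sum_coeff, Finset.sum_eq_single_of_mem jk₀ hjk₀ h1, coeff_C_mul]
    have h2 := (hPrM jk₀).coeff_natDegree
    rw [hPrD jk₀] at h2
    rw [h2, mul_one]
  have hWne : W ≠ 0 := by
    intro h
    apply hcoeff0
    rw [← hWc, h, coeff_zero]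
  -- W has finitely many natural roots
  have hroots_fin : {z : ℂ | W.IsRoot z}.Finite := Polynomial.finite_setOf_isRoot hWne
  have hnat_fin : {n : ℕ | W.eval (n : ℂ) = 0}.Finite := by
    have := hroots_fin.preimage
      (Set.injOn_of_injective (f := fun n : ℕ => (n : ℂ)) Nat.cast_injective)
    exact this
  obtain ⟨N₁, hN₁⟩ := hnat_fin.bddAbove
  have hWeval : ∀ N : ℕ, N₁ < N → W.eval (N : ℂ) ≠ 0 := by
    intro N h he
    exact absurd (hN₁ (Set.mem_setOf_eq ▸ he)) (not_le.mpr h)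
  set M₀ : ℕ := N₁ + K + jk₀.1 + jk₀.2 + 1 with hM₀
  -- the number field L
  set S : Finset ℂ := (box.image (fun jk => (p jk.1).coeff jk.2))
      ∪ ((Finset.range (M₀ + 1)).image a) with hS
  set L : IntermediateField ℚ ℂ := IntermediateField.adjoin ℚ (S : Set ℂ) with hL
  have hSint : ∀ x ∈ (S : Set ℂ), IsIntegral ℚ x := by
    intro x hx
    rw [Finset.mem_coe, hS, Finset.mem_union] at hx
    rcases hx with hx | hx
    · obtain ⟨jk, _, rfl⟩ := Finset.mem_image.mp hx
      exact (hpalg jk.1 jk.2).isIntegral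
    · obtain ⟨i, _, rfl⟩ := Finset.mem_image.mp hx
      exact (halg i).isIntegral
  have hLfin : FiniteDimensional ℚ L := IntermediateField.finiteDimensional_adjoin hSint
  have hSmem : ∀ x ∈ S, x ∈ L := fun x hx => IntermediateField.subset_adjoin ℚ _ hx
  have hamem : ∀ i, i ≤ M₀ → a i ∈ L := by
    intro i hi
    apply hSmem
    rw [hS, Finset.mem_union]
    exact Or.inr (Finset.mem_image.mpr ⟨i, Finset.mem_range.mpr (by omega), rfl⟩)
  have hcmem : ∀ jk ∈ box, (p jk.1).coeff jk.2 ∈ L := by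
    intro jk hjk
    apply hSmem
    rw [hS, Finset.mem_union]
    exact Or.inl (Finset.mem_image.mpr ⟨jk, hjk, rfl⟩)
  -- the split form of the recurrence
  have hsplit : ∀ N : ℕ, K ≤ N →
      W.eval (N : ℂ) * a (N - jk₀.2 + jk₀.1)
        + ∑ jk ∈ box \ T',
            (p jk.1).coeff jk.2 * (ff jk.1 (N - jk.2) : ℂ) * a (N - jk.2 + jk.1) = 0 := by
    intro N hKN
    have h0 := hq N
    rw [← Finset.sum_product'] at h0
    have h1 : ∀ jk ∈ box,
        (if jk.2 ≤ N then (p jk.1).coeff jk.2 * (ff jk.1 (N - jk.2) : ℂ) * a (N - jk.2 + jk.1)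
          else 0)
        = (p jk.1).coeff jk.2 * (ff jk.1 (N - jk.2) : ℂ) * a (N - jk.2 + jk.1) := by
      intro jk hjk
      have := (hboxmem jk hjk).2
      rw [if_pos (by omega)]
    rw [Finset.sum_congr rfl h1, ← Finset.sum_sdiff hT'box] at h0
    have h2 : ∑ jk ∈ T',
        (p jk.1).coeff jk.2 * (ff jk.1 (N - jk.2) : ℂ) * a (N - jk.2 + jk.1)
        = W.eval (N : ℂ) * a (N - jk₀.2 + jk₀.1) := by
      have h3 : ∀ jk ∈ T',
          (p jk.1).coeff jk.2 * (ff jk.1 (N - jk.2) : ℂ) * a (N - jk.2 + jk.1)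
          = ((p jk.1).coeff jk.2 * (ff jk.1 (N - jk.2) : ℂ)) * a (N - jk₀.2 + jk₀.1) := by
        intro jk hjk
        have e1 := hT'v jk hjk
        have e2 := hT'v jk₀ hjk₀
        have e3 := (hboxmem jk (hT'box hjk)).2
        have e4 := (hboxmem jk₀ (hT'box hjk₀)).2
        have : N - jk.2 + jk.1 = N - jk₀.2 + jk₀.1 := by omega
        rw [this, mul_assoc]
      rw [Finset.sum_congr rfl h3, ← Finset.sum_mul]
      congr 1
      rw [hW, eval_finset_sum]
      apply Finset.sum_congr rfl
      intro jk hjk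
      have e3 := (hboxmem jk (hT'box hjk)).2
      rw [eval_mul, eval_C, eval_prod]
      congr 1
      rw [ff, Nat.cast_prod]
      apply Finset.prod_congr rfl
      intro i _
      rw [eval_add, eval_X, eval_C]
      have : ((N - jk.2 + i + 1 : ℕ) : ℂ) = (N : ℂ) - (jk.2 : ℂ) + i + 1 := by
        push_cast [Nat.cast_sub (show jk.2 ≤ N by omega)]
        ring
      rw [this]
      ring
    rw [h2] at h0
    linear_combination h0
  -- all a n lie in L
  have hmemL : ∀ s : ℕ, a s ∈ L := by
    intro s
    induction s using Nat.strong_induction_on with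
    | _ s IH =>
      by_cases hs : s ≤ M₀
      · exact hamem s hs
      · push_neg at hs
        set N : ℕ := s + jk₀.2 - jk₀.1 with hN
        have hj₀M : jk₀.1 ≤ M₀ := by omega
        have hKN : K ≤ N := by omega
        have hN₁N : N₁ < N := by omega
        have hidx : N - jk₀.2 + jk₀.1 = s := by omega
        have h0 := hsplit N hKN
        rw [hidx] at h0
        have hWN := hWeval N hN₁N
        have hWL : W.eval (N : ℂ) ∈ L := by
          rw [hW, eval_finset_sum]
          apply _root_.sum_mem
          intro jk hjk
          rw [eval_mul, eval_C, eval_prod]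
          apply mul_mem (hcmem jk (hT'box hjk))
          apply prod_mem
          intro i _
          rw [eval_add, eval_X, eval_C]
          exact add_mem (natCast_mem L N)
            (sub_mem (add_mem (natCast_mem L i) (one_mem L)) (natCast_mem L jk.2))
        have hSL : ∑ jk ∈ box \ T',
            (p jk.1).coeff jk.2 * (ff jk.1 (N - jk.2) : ℂ) * a (N - jk.2 + jk.1) ∈ L := by
          apply _root_.sum_mem
          intro jk hjkd
          have hjk_box := (Finset.mem_sdiff.mp hjkd).1
          have hnT' := (Finset.mem_sdiff.mp hjkd).2
          by_cases hc : (p jk.1).coeff jk.2 = 0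
          · rw [hc, zero_mul, zero_mul]
            exact zero_mem L
          · have hjkT : jk ∈ T := Finset.mem_filter.mpr ⟨hjk_box, hc⟩
            have hlt : (jk.1 : ℤ) - jk.2 < v :=
              lt_of_le_of_ne (hTv jk hjkT)
                (fun h => hnT' (Finset.mem_filter.mpr ⟨hjkT, h⟩))
            have e2 := hT'v jk₀ hjk₀
            have e3 := (hboxmem jk hjk_box).2
            have hidxlt : N - jk.2 + jk.1 < s := by omega
            exact mul_mem (mul_mem (hcmem jk hjk_box) (natCast_mem L _)) (IH _ hidxlt)
        have h5 : a s = (W.eval (N : ℂ))⁻¹ * (W.eval (N : ℂ) * a s) :=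
          (inv_mul_cancel_left₀ hWN (a s)).symm
        have h4 : W.eval (N : ℂ) * a s
            = - ∑ jk ∈ box \ T',
              (p jk.1).coeff jk.2 * (ff jk.1 (N - jk.2) : ℂ) * a (N - jk.2 + jk.1) := by
          linear_combination h0
        rw [h4] at h5
        rw [h5]
        exact mul_mem (inv_mem hWL) (neg_mem hSL)
  -- degree bound from the number field
  set D : ℕ := Module.finrank ℚ L with hD
  have hD1 : 1 ≤ D := Module.finrank_pos
  have hdeg : ∀ x : ℂ, x ∈ L → (minpoly ℚ x).natDegree ≤ D := by
    intro x hx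
    have he : minpoly ℚ (L.val ⟨x, hx⟩) = minpoly ℚ (⟨x, hx⟩ : L) :=
      minpoly.algHom_eq L.val Subtype.val_injective _
    have hrfl : L.val ⟨x, hx⟩ = x := rfl
    rw [hrfl] at he
    rw [he]
    exact minpoly.natDegree_le _
  -- C ≥ 1
  have hC1 : (1 : ℝ) ≤ C := by
    obtain ⟨d₁, hd₁, hle, _⟩ := hden 1 le_rfl
    have h1 : (1 : ℝ) ≤ (d₁ : ℝ) := by exact_mod_cast hd₁
    calc (1 : ℝ) ≤ (d₁ : ℝ) := h1
      _ ≤ C ^ 1 := hle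
      _ = C := pow_one C
  -- superexponential decay of the coefficients
  set ρ : ℝ := 2 * C ^ (2 * D) with hρ
  have hρpos : (0 : ℝ) < ρ := by positivity
  have htend : Filter.Tendsto (fun n : ℕ => ‖a n * ((ρ : ℝ) : ℂ) ^ n‖)
      Filter.atTop (nhds 0) := by
    have h1 := (hg ((ρ : ℝ) : ℂ)).summable.tendsto_atTop_zero
    simpa using h1.norm
  have hev : ∀ᶠ n in Filter.atTop, ‖a n * ((ρ : ℝ) : ℂ) ^ n‖ < 1 :=
    htend.eventually_lt_const one_pos
  obtain ⟨N₂, hN₂⟩ := Filter.eventually_atTop.mp hev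
  refine ⟨N₂ + 1, fun n hn => ?_⟩
  by_contra hne
  obtain ⟨d, hd, hdle, hint⟩ := hden n (by omega)
  have hB : (1 : ℝ) ≤ C ^ n := one_le_pow₀ hC1
  have hdegx : (minpoly ℚ ((d : ℂ) * a n)).natDegree ≤ D :=
    hdeg _ (mul_mem (natCast_mem L d) (hmemL n))
  have hkb := key_bound hne d hd (hint n le_rfl)
    hB (fun z hz => hconj n (by omega) n le_rfl z hz) hdegx
  have habs : (0 : ℝ) ≤ ‖(a n)‖ := norm_nonneg _
  have hup : ‖(a n)‖ * ρ ^ n < 1 := by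
    have h1 := hN₂ n (by omega)
    rwa [norm_mul, norm_pow, Complex.norm_real, Real.norm_eq_abs,
      abs_of_pos hρpos] at h1
  -- chain of inequalities
  have e1 : ((d : ℝ) * C ^ n) ^ (D - 1) ≤ (C ^ (2 * n)) ^ (D - 1) := by
    apply pow_le_pow_left₀ (by positivity)
    calc (d : ℝ) * C ^ n ≤ C ^ n * C ^ n :=
          mul_le_mul_of_nonneg_right hdle (by positivity)
      _ = C ^ (2 * n) := by rw [← pow_add]; ring_nf
  have e2 : (d : ℝ) * ‖(a n)‖ * ((d : ℝ) * C ^ n) ^ (D - 1)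
      ≤ C ^ n * ‖(a n)‖ * (C ^ (2 * n)) ^ (D - 1) := by
    apply mul_le_mul (mul_le_mul hdle le_rfl habs (by positivity)) e1 (by positivity)
      (by positivity)
  have e3 : C ^ n * ‖(a n)‖ * (C ^ (2 * n)) ^ (D - 1)
      = ‖(a n)‖ * C ^ (n + 2 * n * (D - 1)) := by
    rw [← pow_mul]
    ring
  have e4 : n + 2 * n * (D - 1) ≤ 2 * D * n := by
    have hDE : D = (D - 1) + 1 := by omega
    set E := D - 1 with hE
    rw [hDE]
    set t := n * E with ht
    have : 2 * n * E = 2 * t := by rw [ht]; ring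
    rw [this]
    have : 2 * (E + 1) * n = 2 * t + 2 * n := by rw [ht]; ring
    rw [this]
    omega
  have e5 : C ^ (n + 2 * n * (D - 1)) ≤ C ^ (2 * D * n) := pow_le_pow_right₀ hC1 e4
  have h7 : 1 ≤ ‖(a n)‖ * C ^ (2 * D * n) := by
    calc (1 : ℝ) ≤ (d : ℝ) * ‖(a n)‖ * ((d : ℝ) * C ^ n) ^ (D - 1) := hkb
      _ ≤ C ^ n * ‖(a n)‖ * (C ^ (2 * n)) ^ (D - 1) := e2
      _ = ‖(a n)‖ * C ^ (n + 2 * n * (D - 1)) := e3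
      _ ≤ ‖(a n)‖ * C ^ (2 * D * n) :=
          mul_le_mul_of_nonneg_left e5 habs
  have e6 : ρ ^ n = 2 ^ n * C ^ (2 * D * n) := by
    rw [hρ, mul_pow, ← pow_mul]
  have h8 : (2 : ℝ) ≤ 2 ^ n := by
    calc (2 : ℝ) = 2 ^ 1 := (pow_one 2).symm
      _ ≤ 2 ^ n := pow_le_pow_right₀ (by norm_num) (by omega)
  have h9 : (2 : ℝ) ≤ ‖(a n)‖ * ρ ^ n := by
    rw [e6]
    calc (2 : ℝ) = 2 * 1 := by ring
      _ ≤ 2 ^ n * (‖(a n)‖ * C ^ (2 * D * n)) :=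
          mul_le_mul h8 h7 zero_le_one (by positivity)
      _ = ‖(a n)‖ * (2 ^ n * C ^ (2 * D * n)) := by ring
  linarith
end
end

section
/- Let f : ℂ → ℂ be an entire function with f(z) = ∑_{n≥0} (a_n/n!) zⁿ for all z ∈ ℂ, where the complex coefficients satisfy |a_n| ≤ Cⁿ for all n ≥ 1 for some C > 0, and suppose |f(w)| ≤ M·e^{ρ|w|} for all w ∈ ℂ for some M, ρ > 0. Then there is a real R > 0 such that for every real x > R, the Laplace integral ∫₀^∞ f(t)·e^{−tx} dt converges absolutely, the series ∑_{n≥0} a_n x^{−n−1} converges absolutely, and ∫₀^∞ f(t)·e^{−tx} dt = ∑_{n≥0} a_n x^{−n−1}. -/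
open scoped BigOperators

noncomputable section

open MeasureTheory

lemma laplace_aux_summable {a : ℕ → ℂ} {C x : ℝ} (hC : 0 < C) (hx : 0 < x) (hCx : C < x)
    (hbound : ∀ n : ℕ, 1 ≤ n → ‖a n‖ ≤ C ^ n) :
    Summable (fun n : ℕ => ‖a n‖ * x⁻¹ ^ (n + 1)) := by
  rw [← summable_nat_add_iff 1]
  have hg : Summable (fun n : ℕ => (C * x⁻¹) ^ n) := by
    apply summable_geometric_of_lt_one (by positivity)
    rw [← div_eq_mul_inv, div_lt_one hx]
    exact hCx
  apply Summable.of_nonneg_of_le (fun n => by positivity)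
    (fun n => ?_) (hg.mul_right ((C * x⁻¹) * x⁻¹))
  calc ‖a (n + 1)‖ * x⁻¹ ^ (n + 1 + 1)
      ≤ C ^ (n + 1) * x⁻¹ ^ (n + 2) :=
        mul_le_mul_of_nonneg_right (hbound (n + 1) (by omega)) (by positivity)
    _ = (C * x⁻¹) ^ n * (C * x⁻¹ * x⁻¹) := by rw [mul_pow]; ring

/-- **Laplace transform of a function of exponential growth.** If `f(z) = ∑ aₙ/n! zⁿ` is
entire with `|aₙ| ≤ Cⁿ` and `|f(w)| ≤ M·e^(ρ|w|)`, then for all large real `x` the Laplace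
integral `∫₀^∞ f(t)e^(−tx) dt` converges absolutely, the series `∑ aₙ x^(−n−1)` converges
absolutely, and the two agree. -/
theorem laplace_transform_eq_series (f : ℂ → ℂ) (a : ℕ → ℂ)
    (hsum : ∀ z : ℂ, HasSum (fun n : ℕ => a n / (n.factorial : ℂ) * z ^ n) (f z))
    (C : ℝ) (hC : 0 < C) (hbound : ∀ n : ℕ, 1 ≤ n → ‖a n‖ ≤ C ^ n)
    (M ρ : ℝ) (hM : 0 < M) (hρ : 0 < ρ)
    (hgrowth : ∀ w : ℂ, ‖f w‖ ≤ M * Real.exp (ρ * ‖w‖)) :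
    ∃ R : ℝ, 0 < R ∧ ∀ x : ℝ, R < x →
      IntegrableOn (fun t : ℝ => f t * Complex.exp (-(t * x))) (Set.Ioi 0) ∧
      Summable (fun n : ℕ => ‖a n‖ * x⁻¹ ^ (n + 1)) ∧
      ∫ t in Set.Ioi (0 : ℝ), f t * Complex.exp (-(t * x)) =
        ∑' n : ℕ, a n / (x : ℂ) ^ (n + 1) := by
  -- continuity of f
  have hcont : Continuous f := by
    have hf_eq : f = fun z => ∑' n : ℕ, a n / (n.factorial : ℂ) * z ^ n :=
      funext fun z => ((hsum z).tsum_eq).symm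
    rw [continuous_iff_continuousAt]
    intro z₀
    set r : ℝ := ‖z₀‖ + 1 with hr
    have hr1 : 1 ≤ r := le_add_of_nonneg_left (norm_nonneg z₀)
    have hr0 : 0 < r := by linarith
    have hsumm : Summable (fun n : ℕ => ‖a n‖ * r ^ n / n.factorial) := by
      rw [← summable_nat_add_iff 1]
      apply Summable.of_nonneg_of_le (fun n => by positivity) (fun n => ?_)
        ((summable_nat_add_iff 1).2 (Real.summable_pow_div_factorial (C * r)))
      have h1 : ‖a (n+1)‖ * r ^ (n+1) ≤ (C * r) ^ (n+1) := by
        rw [mul_pow]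
        exact mul_le_mul_of_nonneg_right (hbound (n+1) (by omega)) (by positivity)
      exact div_le_div_of_nonneg_right h1 (by positivity) |>.trans_eq rfl
    have hcOn : ContinuousOn (fun z : ℂ => ∑' n : ℕ, a n / (n.factorial : ℂ) * z ^ n)
        (Metric.closedBall 0 r) := by
      apply continuousOn_tsum (fun n => (continuous_const.mul (continuous_pow n)).continuousOn)
        hsumm
      intro n z hz
      rw [Metric.mem_closedBall, dist_zero_right] at hz
      have : ‖a n / (n.factorial : ℂ) * z ^ n‖ = ‖a n‖ / n.factorial * ‖z‖ ^ n := by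
        simp [norm_mul, norm_div, norm_pow, Complex.norm_natCast]
      show ‖a n / (n.factorial : ℂ) * z ^ n‖ ≤ _
      rw [this, div_mul_eq_mul_div]
      apply div_le_div_of_nonneg_right _ (by positivity)
      exact mul_le_mul_of_nonneg_left (pow_le_pow_left₀ (norm_nonneg z) hz n)
        (norm_nonneg _)
    rw [hf_eq]
    apply hcOn.continuousAt
    apply Filter.mem_of_superset (Metric.isOpen_ball.mem_nhds ?_) Metric.ball_subset_closedBall
    rw [Metric.mem_ball, dist_zero_right]
    linarith
  refine ⟨max C ρ, lt_max_of_lt_left hC, fun x hx => ?_⟩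
  have hCx : C < x := lt_of_le_of_lt (le_max_left _ _) hx
  have hρx : ρ < x := lt_of_le_of_lt (le_max_right _ _) hx
  have hx0 : 0 < x := hC.trans hCx
  -- the real integral formula
  have hval : ∀ n : ℕ, ∫ t in Set.Ioi (0 : ℝ), t ^ n * Real.exp (-(x * t)) =
      n.factorial / x ^ (n + 1) := by
    intro n
    have h := Real.integral_rpow_mul_exp_neg_mul_Ioi
      (a := (n : ℝ) + 1) (r := x) (by positivity) hx0
    rw [show ((n : ℝ) + 1) - 1 = (n : ℝ) by ring] at h
    rw [show ∫ t in Set.Ioi (0:ℝ), t ^ n * Real.exp (-(x * t))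
        = ∫ t in Set.Ioi (0:ℝ), t ^ (n : ℝ) * Real.exp (-(x * t)) by
      refine setIntegral_congr_fun measurableSet_Ioi fun t _ => ?_
      rw [Real.rpow_natCast], h]
    rw [Real.Gamma_nat_eq_factorial,
      show ((n : ℝ) + 1) = ((n + 1 : ℕ) : ℝ) by push_cast; ring, Real.rpow_natCast]
    rw [one_div, inv_pow]
    ring
  -- integrability of the real functions
  have hgint : ∀ n : ℕ, IntegrableOn (fun t : ℝ => t ^ n * Real.exp (-(x * t)))
      (Set.Ioi (0 : ℝ)) := by
    intro n
    have h := integrableOn_rpow_mul_exp_neg_mul_rpow (s := (n : ℝ)) (p := 1)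
      (lt_of_lt_of_le (by norm_num) (Nat.cast_nonneg n)) zero_lt_one hx0
    apply h.congr_fun ?_ measurableSet_Ioi
    intro t ht
    simp only [Real.rpow_one, Real.rpow_natCast, neg_mul]
  -- summability (part 2)
  have hsummable := laplace_aux_summable hC hx0 hCx hbound
  -- part 1: integrability
  have hmeas : Continuous (fun t : ℝ => f t * Complex.exp (-((t : ℂ) * (x : ℂ)))) := by
    apply (hcont.comp Complex.continuous_ofReal).mul
    exact Complex.continuous_exp.comp (by continuity)
  have hint : IntegrableOn (fun t : ℝ => f t * Complex.exp (-((t : ℂ) * (x : ℂ))))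
      (Set.Ioi (0 : ℝ)) := by
    apply Integrable.mono' (((exp_neg_integrableOn_Ioi 0 (by linarith : (0:ℝ) < x - ρ))).const_mul M)
      hmeas.aestronglyMeasurable.restrict
    filter_upwards [ae_restrict_mem measurableSet_Ioi] with t ht
    rw [Set.mem_Ioi] at ht
    rw [norm_mul, Complex.norm_exp]
    have h1 : (-((t : ℂ) * (x : ℂ))).re = -(t * x) := by simp
    rw [h1]
    calc ‖f t‖ * Real.exp (-(t * x))
        ≤ (M * Real.exp (ρ * ‖(t : ℂ)‖)) * Real.exp (-(t * x)) :=
          mul_le_mul_of_nonneg_right (hgrowth _) (Real.exp_pos _).le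
      _ = M * Real.exp (-(x - ρ) * t) := by
          rw [Complex.norm_real, Real.norm_eq_abs, abs_of_pos ht, mul_assoc, ← Real.exp_add]
          ring_nf
  refine ⟨hint, hsummable, ?_⟩
  -- the term functions
  set F : ℕ → ℝ → ℂ := fun n t => a n / (n.factorial : ℂ) * (t : ℂ) ^ n
    * Complex.exp (-((t : ℂ) * (x : ℂ))) with hF
  have hFcongr : ∀ n : ℕ, ∀ t ∈ Set.Ioi (0:ℝ),
      F n t = a n / (n.factorial : ℂ) * ((t ^ n * Real.exp (-(x * t)) : ℝ) : ℂ) := by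
    intro n t ht
    rw [hF, Complex.ofReal_mul, Complex.ofReal_pow, Complex.ofReal_exp, Complex.ofReal_neg,
      Complex.ofReal_mul, mul_comm (x : ℂ) (t : ℂ)]
    ring
  have hFint : ∀ n : ℕ, Integrable (F n) (volume.restrict (Set.Ioi (0:ℝ))) := by
    intro n
    apply Integrable.congr (((hgint n).ofReal (𝕜 := ℂ)).const_mul (a n / (n.factorial : ℂ)))
    filter_upwards [ae_restrict_mem measurableSet_Ioi] with t ht
    exact (hFcongr n t ht).symm
  have hFnorm : ∀ n : ℕ, ∫ t in Set.Ioi (0:ℝ), ‖F n t‖ =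
      ‖a n‖ * x⁻¹ ^ (n + 1) := by
    intro n
    rw [show ∫ t in Set.Ioi (0:ℝ), ‖F n t‖
        = ∫ t in Set.Ioi (0:ℝ), (‖a n‖ / n.factorial) * (t ^ n * Real.exp (-(x * t)))
        by
      refine setIntegral_congr_fun measurableSet_Ioi fun t ht => ?_
      rw [hFcongr n t ht, norm_mul, Complex.norm_real, Real.norm_eq_abs,
        norm_div, Complex.norm_natCast]
      rw [abs_of_nonneg (mul_nonneg (pow_nonneg (le_of_lt (Set.mem_Ioi.mp ht)) n)
        (Real.exp_pos _).le)]]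
    rw [integral_const_mul, hval n]
    have hnfac : (0:ℝ) < n.factorial := by exact_mod_cast n.factorial_pos
    rw [inv_pow]
    field_simp
    try ring
  have hFsum : Summable fun n => ∫ t in Set.Ioi (0:ℝ), ‖F n t‖ := by
    simp_rw [hFnorm]; exact hsummable
  have hHS := hasSum_integral_of_summable_integral_norm hFint hFsum
  have htsum : ∀ t : ℝ, ∑' n, F n t = f t * Complex.exp (-((t : ℂ) * (x : ℂ))) := by
    intro t
    exact ((hsum t).mul_right (Complex.exp (-((t : ℂ) * (x : ℂ))))).tsum_eq
  have hFval : ∀ n : ℕ, ∫ t in Set.Ioi (0:ℝ), F n t = a n / (x : ℂ) ^ (n + 1) := by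
    intro n
    rw [show ∫ t in Set.Ioi (0:ℝ), F n t
        = ∫ t in Set.Ioi (0:ℝ), a n / (n.factorial : ℂ) * ((t ^ n * Real.exp (-(x * t)) : ℝ) : ℂ)
        from setIntegral_congr_fun measurableSet_Ioi (hFcongr n)]
    have h2 : ∫ t in Set.Ioi (0:ℝ), ((t ^ n * Real.exp (-(x * t)) : ℝ) : ℂ)
        = ((∫ t in Set.Ioi (0:ℝ), t ^ n * Real.exp (-(x * t)) : ℝ) : ℂ) := by
      exact integral_ofReal
    rw [integral_const_mul, h2, hval n]
    have hnfac : ((n.factorial : ℂ)) ≠ 0 := by exact_mod_cast n.factorial_ne_zero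
    have hxne : ((x : ℂ)) ≠ 0 := by exact_mod_cast hx0.ne'
    push_cast
    field_simp
  rw [show (fun t : ℝ => f t * Complex.exp (-((t:ℂ) * (x:ℂ)))) = fun t : ℝ => ∑' n, F n t from
    funext fun t => (htsum t).symm]
  have hHS' : HasSum (fun n : ℕ => a n / (x : ℂ) ^ (n + 1))
      (∫ t in Set.Ioi (0:ℝ), ∑' n, F n t) := by
    have : (fun n => ∫ t in Set.Ioi (0:ℝ), F n t) = fun n : ℕ => a n / (x : ℂ) ^ (n + 1) :=
      funext hFval
    rw [← this]
    exact hHS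
  exact hHS'.tsum_eq.symm
end
end

section
/- Every E-function f is either a polynomial with coefficients in ℚ̄ (i.e., there is P ∈ ℚ̄[z] with f(z) = P(z) for all z ∈ ℂ) or transcendental over ℂ(z) (i.ics., there is no nonzero polynomial Q ∈ ℂ[X,Y] with Q(z, f(z)) = 0 for all z ∈ ℂ). -/
open scoped BigOperators

noncomputable section

/-- The complex absolute value, as an `AbsoluteValue` given by the norm. -/
def Complex.abs : AbsoluteValue ℂ ℝ where
  toFun := fun z => ‖z‖
  map_mul' := norm_mul
  nonneg' := norm_nonneg
  eq_zero' := fun _ => norm_eq_zero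
  add_le' := norm_add_le

lemma Complex.norm_eq_abs (z : ℂ) : ‖z‖ = Complex.abs z := rfl

lemma Complex.abs_ofReal (r : ℝ) : Complex.abs (r : ℂ) = |r| := Complex.norm_real r

lemma abs_circleMap_zero (R θ : ℝ) : Complex.abs (circleMap 0 R θ) = |R| :=
  norm_circleMap_zero R θ

lemma aux_root_bound {d : ℕ} (hd : 1 ≤ d) (b : ℕ → ℂ) (x : ℂ) (hb : b d ≠ 0)
    (h : ∑ i ∈ Finset.range (d + 1), b i * x ^ i = 0) :
    Complex.abs x ≤ 1 + (∑ i ∈ Finset.range d, Complex.abs (b i)) / Complex.abs (b d) := by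
  obtain ⟨e, rfl⟩ : ∃ e, d = e + 1 := ⟨d - 1, (Nat.succ_pred_eq_of_pos hd).symm⟩
  set r := Complex.abs x with hr
  set S := ∑ i ∈ Finset.range (e + 1), Complex.abs (b i) with hS
  have hβ : 0 < Complex.abs (b (e + 1)) := AbsoluteValue.pos _ hb
  have hS0 : 0 ≤ S := Finset.sum_nonneg fun _ _ => AbsoluteValue.nonneg _ _
  by_cases h1 : r ≤ 1
  · have : 0 ≤ S / Complex.abs (b (e + 1)) := div_nonneg hS0 hβ.le
    linarith
  push_neg at h1
  have hr0 : (0 : ℝ) < r := lt_trans one_pos h1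
  have heq : b (e + 1) * x ^ (e + 1) = -∑ i ∈ Finset.range (e + 1), b i * x ^ i := by
    rw [Finset.sum_range_succ] at h
    linear_combination h
  have habs : Complex.abs (b (e + 1)) * r ^ (e + 1)
      ≤ ∑ i ∈ Finset.range (e + 1), Complex.abs (b i) * r ^ i := by
    calc Complex.abs (b (e + 1)) * r ^ (e + 1)
        = Complex.abs (b (e + 1) * x ^ (e + 1)) := by rw [map_mul, map_pow]
      _ = Complex.abs (∑ i ∈ Finset.range (e + 1), b i * x ^ i) := by rw [heq, AbsoluteValue.map_neg]
      _ ≤ ∑ i ∈ Finset.range (e + 1), Complex.abs (b i * x ^ i) :=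
          AbsoluteValue.sum_le _ _ _
      _ = ∑ i ∈ Finset.range (e + 1), Complex.abs (b i) * r ^ i := by
          simp [map_mul, map_pow, hr]
  have hsum2 : ∑ i ∈ Finset.range (e + 1), Complex.abs (b i) * r ^ i ≤ S * r ^ e := by
    rw [hS, Finset.sum_mul]
    refine Finset.sum_le_sum fun i hi => ?_
    have : r ^ i ≤ r ^ e := pow_le_pow_right₀ h1.le (Nat.lt_succ_iff.mp (Finset.mem_range.mp hi))
    exact mul_le_mul_of_nonneg_left this (AbsoluteValue.nonneg _ _)
  have hre : (0 : ℝ) < r ^ e := pow_pos hr0 e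
  have key : Complex.abs (b (e + 1)) * r ≤ S := by
    have h2 : Complex.abs (b (e + 1)) * r * r ^ e ≤ S * r ^ e := by
      calc Complex.abs (b (e + 1)) * r * r ^ e
          = Complex.abs (b (e + 1)) * r ^ (e + 1) := by ring
        _ ≤ S * r ^ e := le_trans habs hsum2
    exact le_of_mul_le_mul_right h2 hre
  have : r ≤ S / Complex.abs (b (e + 1)) := (le_div_iff₀ hβ).mpr (by linarith [key])
  linarith

lemma aux_eval_upper (q : Polynomial ℂ) {z : ℂ} (h1 : 1 ≤ Complex.abs z) :
    Complex.abs (q.eval z) ≤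
      (∑ j ∈ Finset.range (q.natDegree + 1), Complex.abs (q.coeff j)) *
        Complex.abs z ^ q.natDegree := by
  rw [Polynomial.eval_eq_sum_range]
  refine (AbsoluteValue.sum_le _ _ _).trans ?_
  rw [Finset.sum_mul]
  refine Finset.sum_le_sum fun i hi => ?_
  rw [map_mul, map_pow]
  exact mul_le_mul_of_nonneg_left
    (pow_le_pow_right₀ h1 (Nat.lt_succ_iff.mp (Finset.mem_range.mp hi)))
    (AbsoluteValue.nonneg _ _)

lemma aux_eval_lower (q : Polynomial ℂ) (hq : q ≠ 0) :
    ∃ R₀ c : ℝ, 1 ≤ R₀ ∧ 0 < c ∧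
      ∀ z : ℂ, R₀ ≤ Complex.abs z → c ≤ Complex.abs (q.eval z) := by
  rcases Nat.eq_zero_or_pos q.natDegree with he | he
  · refine ⟨1, Complex.abs (q.coeff 0), le_refl 1, ?_, ?_⟩
    · have : q.coeff 0 ≠ 0 := by
        have := Polynomial.leadingCoeff_ne_zero.mpr hq
        rwa [Polynomial.leadingCoeff, he] at this
      exact AbsoluteValue.pos _ this
    · intro z _
      obtain ⟨a, rfl⟩ := Polynomial.natDegree_eq_zero.mp he
      simp
  · obtain ⟨k, hk⟩ : ∃ k, q.natDegree = k + 1 := ⟨q.natDegree - 1, (Nat.succ_pred_eq_of_pos he).symm⟩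
    set lc := q.leadingCoeff with hlc
    have hlc0 : 0 < Complex.abs lc := AbsoluteValue.pos _ (Polynomial.leadingCoeff_ne_zero.mpr hq)
    set S := ∑ j ∈ Finset.range (k + 1), Complex.abs (q.coeff j) with hS
    have hS0 : 0 ≤ S := Finset.sum_nonneg fun _ _ => AbsoluteValue.nonneg _ _
    refine ⟨max 1 ((S + 1) / Complex.abs lc), 1, le_max_left _ _, one_pos, ?_⟩
    intro z hz
    set r := Complex.abs z with hr
    have hr1 : 1 ≤ r := le_trans (le_max_left _ _) hz
    have hr0 : 0 < r := lt_of_lt_of_le one_pos hr1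
    have hrS : S + 1 ≤ Complex.abs lc * r := by
      have := le_trans (le_max_right _ _) hz
      rwa [div_le_iff₀ hlc0, mul_comm] at this
    have heval : q.eval z = (∑ j ∈ Finset.range (k + 1), q.coeff j * z ^ j) + lc * z ^ (k + 1) := by
      rw [Polynomial.eval_eq_sum_range, hk, Finset.sum_range_succ, hlc,
        Polynomial.leadingCoeff, hk]
    have htail : Complex.abs (∑ j ∈ Finset.range (k + 1), q.coeff j * z ^ j) ≤ S * r ^ k := by
      refine (AbsoluteValue.sum_le _ _ _).trans ?_
      rw [hS, Finset.sum_mul]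
      refine Finset.sum_le_sum fun i hi => ?_
      rw [map_mul, map_pow]
      exact mul_le_mul_of_nonneg_left
        (pow_le_pow_right₀ hr1 (Nat.lt_succ_iff.mp (Finset.mem_range.mp hi)))
        (AbsoluteValue.nonneg _ _)
    have htri : Complex.abs lc * r ^ (k + 1) - S * r ^ k ≤ Complex.abs (q.eval z) := by
      have h1 : Complex.abs (lc * z ^ (k + 1)) ≤ Complex.abs (q.eval z) +
          Complex.abs (∑ j ∈ Finset.range (k + 1), q.coeff j * z ^ j) := by
        calc Complex.abs (lc * z ^ (k + 1))
            = Complex.abs (q.eval z - ∑ j ∈ Finset.range (k + 1), q.coeff j * z ^ j) := by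
              rw [heval, add_sub_cancel_left]
          _ ≤ _ := by
              simpa [sub_eq_add_neg] using
                AbsoluteValue.add_le Complex.abs (q.eval z)
                  (-∑ j ∈ Finset.range (k + 1), q.coeff j * z ^ j)
      rw [map_mul, map_pow] at h1
      linarith [htail]
    have hrk : (0 : ℝ) < r ^ k := pow_pos hr0 k
    have : (1 : ℝ) * r ^ k ≤ Complex.abs lc * r ^ (k + 1) - S * r ^ k := by
      have : Complex.abs lc * r ^ (k + 1) = (Complex.abs lc * r) * r ^ k := by ring
      nlinarith [hrk, hrS]
    have h1rk : (1 : ℝ) ≤ (1 : ℝ) * r ^ k := by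
      rw [one_mul]; exact one_le_pow₀ hr1
    linarith

lemma aux_growth_poly (f : ℂ → ℂ) (c : ℕ → ℂ)
    (hsum : ∀ z : ℂ, HasSum (fun n : ℕ => c n * z ^ n) (f z))
    (N : ℕ) (A R₀ : ℝ) (hR₀ : 1 ≤ R₀) (hA : 0 ≤ A)
    (hbound : ∀ z : ℂ, R₀ ≤ Complex.abs z → Complex.abs (f z) ≤ A * Complex.abs z ^ N) :
    ∀ n, N < n → c n = 0 := by
  set p := FormalMultilinearSeries.ofScalars ℂ c with hp
  have hnorm : ∀ n, ‖p n‖ = Complex.abs (c n) := by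
    intro n
    rw [hp, FormalMultilinearSeries.ofScalars_norm, Complex.norm_eq_abs]
  have hrad : p.radius = ⊤ := by
    apply FormalMultilinearSeries.radius_eq_top_of_forall_nnreal_isBigO
    intro r
    have hs : Summable fun n : ℕ => c n * ((r : ℝ) : ℂ) ^ n := (hsum _).summable
    have ht : Filter.Tendsto (fun n : ℕ => ‖p n‖ * (r : ℝ) ^ n) Filter.atTop (nhds 0) := by
      have := hs.tendsto_atTop_zero
      have h2 : Filter.Tendsto (fun n : ℕ => ‖c n * ((r : ℝ) : ℂ) ^ n‖) Filter.atTop (nhds 0) := by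
        simpa using this.norm
      refine h2.congr fun n => ?_
      simp [norm_mul, norm_pow, hnorm, Complex.norm_eq_abs, Complex.abs_ofReal,
        abs_of_nonneg r.coe_nonneg]
    exact ht.isBigO_one ℝ
  have hball : HasFPowerSeriesOnBall f p 0 ⊤ := by
    have h0 : 0 < p.radius := by rw [hrad]; exact ENNReal.zero_lt_top
    have := p.hasFPowerSeriesOnBall h0
    rw [hrad] at this
    convert this using 1
    funext z
    rw [FormalMultilinearSeries.sum]
    have : (fun n => p n fun _ => z) = fun n => c n * z ^ n := by
      funext n
      rw [hp, FormalMultilinearSeries.ofScalars_apply_eq, smul_eq_mul]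
    rw [this, (hsum z).tsum_eq]
  have hdf : Differentiable ℂ f := by
    intro z
    have hz : z ∈ Metric.eball (0 : ℂ) ⊤ := by simp [edist_lt_top]
    exact (hball.analyticAt_of_mem hz).differentiableAt
  intro n hn
  -- coefficient bound for every R ≥ R₀
  have key : ∀ R : ℝ, R₀ ≤ R → Complex.abs (c n) ≤ A * R ^ N / R ^ n := by
    intro R hR
    have hR1 : (1 : ℝ) ≤ R := le_trans hR₀ hR
    have hR0 : (0 : ℝ) < R := lt_of_lt_of_le one_pos hR1
    set R' : NNReal := R.toNNReal with hR'
    have hR'0 : 0 < R' := by simp [hR', Real.toNNReal_pos]; linarith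
    have hRR' : ((R' : ℝ)) = R := Real.coe_toNNReal R hR0.le
    have hc := hdf.hasFPowerSeriesOnBall 0 hR'0
    have hpe : p = cauchyPowerSeries f 0 R' :=
      hball.hasFPowerSeriesAt.eq_formalMultilinearSeries hc.hasFPowerSeriesAt
    have hcb := norm_cauchyPowerSeries_le f 0 (R' : ℝ) n
    rw [← hpe, hnorm] at hcb
    -- bound the integral
    have hint : (∫ θ : ℝ in (0)..2 * Real.pi, ‖f (circleMap 0 (R' : ℝ) θ)‖)
        ≤ 2 * Real.pi * (A * R ^ N) := by
      have hmono : ∀ θ ∈ Set.Icc (0 : ℝ) (2 * Real.pi),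
          ‖f (circleMap 0 (R' : ℝ) θ)‖ ≤ A * R ^ N := by
        intro θ _
        rw [Complex.norm_eq_abs]
        have habs : Complex.abs (circleMap 0 (R' : ℝ) θ) = R := by
          rw [abs_circleMap_zero, abs_of_nonneg (by positivity), hRR']
        have := hbound (circleMap 0 (R' : ℝ) θ) (by rw [habs]; exact hR)
        rwa [habs] at this
      have hle := intervalIntegral.integral_mono_on (by positivity)
        (((hdf.continuous.comp (continuous_circleMap 0 (R' : ℝ))).norm).intervalIntegrable 0 (2 * Real.pi))
        (intervalIntegrable_const (c := A * R ^ N) (μ := MeasureTheory.volume) (a := 0) (b := 2*Real.pi)) hmono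
      calc (∫ θ : ℝ in (0)..2 * Real.pi, ‖f (circleMap 0 (R' : ℝ) θ)‖)
          ≤ ∫ _ : ℝ in (0)..2 * Real.pi, A * R ^ N := hle
        _ = 2 * Real.pi * (A * R ^ N) := by
            rw [intervalIntegral.integral_const, smul_eq_mul]; ring
    have h2pi : (0 : ℝ) < 2 * Real.pi := Real.two_pi_pos
    calc Complex.abs (c n)
        ≤ ((2 * Real.pi)⁻¹ * ∫ θ : ℝ in (0)..2 * Real.pi, ‖f (circleMap 0 (R' : ℝ) θ)‖)
            * |(R' : ℝ)|⁻¹ ^ n := hcb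
      _ ≤ ((2 * Real.pi)⁻¹ * (2 * Real.pi * (A * R ^ N))) * |(R' : ℝ)|⁻¹ ^ n := by
          apply mul_le_mul_of_nonneg_right
          · exact mul_le_mul_of_nonneg_left hint (by positivity)
          · positivity
      _ = A * R ^ N / R ^ n := by
          rw [hRR', abs_of_nonneg hR0.le, inv_pow]
          field_simp
  -- let R → ∞
  have habs0 : Complex.abs (c n) ≤ 0 := by
    refine le_of_forall_pos_le_add fun ε hε => ?_
    have hnN : N + 1 ≤ n := hn
    set R : ℝ := max R₀ (A / ε) with hRdef
    have hR : R₀ ≤ R := le_max_left _ _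
    have hR1 : (1 : ℝ) ≤ R := le_trans hR₀ hR
    have hR0 : (0 : ℝ) < R := lt_of_lt_of_le one_pos hR1
    have h1 : A * R ^ N / R ^ n ≤ A / R := by
      rw [div_le_div_iff₀ (by positivity) hR0]
      calc A * R ^ N * R = A * R ^ (N + 1) := by ring
        _ ≤ A * R ^ n := by
            apply mul_le_mul_of_nonneg_left (pow_le_pow_right₀ hR1 hnN) hA
    have h2 : A / R ≤ ε := by
      rw [div_le_iff₀ hR0]
      have : A / ε ≤ R := le_max_right _ _
      calc A = (A / ε) * ε := by field_simp
        _ ≤ R * ε := mul_le_mul_of_nonneg_right this hε.le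
        _ = ε * R := mul_comm _ _
    calc Complex.abs (c n) ≤ A * R ^ N / R ^ n := key R hR
      _ ≤ ε := le_trans h1 h2
      _ = 0 + ε := by ring
  have := AbsoluteValue.nonneg Complex.abs (c n)
  have : Complex.abs (c n) = 0 := le_antisymm habs0 this
  exact (AbsoluteValue.eq_zero _).mp this

lemma aux_poly_case (f : ℂ → ℂ) (c : ℕ → ℂ)
    (hsum : ∀ z : ℂ, HasSum (fun n : ℕ => c n * z ^ n) (f z))
    (N : ℕ) (hN : ∀ n, N < n → c n = 0) :
    ∀ z : ℂ, f z = (∑ n ∈ Finset.range (N + 1), Polynomial.C (c n) * Polynomial.X ^ n).eval z := by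
  intro z
  have h0 : ∀ n ∉ Finset.range (N + 1), c n * z ^ n = 0 := by
    intro n hn
    have : N < n := by
      have := Finset.mem_range.not.mp hn
      by_contra hc; exact this (by omega)
    rw [hN n this]
    ring
  have h1 : HasSum (fun n : ℕ => c n * z ^ n) (∑ n ∈ Finset.range (N + 1), c n * z ^ n) :=
    hasSum_sum_of_ne_finset_zero h0
  have := (hsum z).unique h1
  rw [this]
  simp [Polynomial.eval_finset_sum]

lemma aux_coeff_alg (k : ℕ) (x : ℂ) (hx : IsAlgebraic ℚ x) :
    IsAlgebraic ℚ (x / (k.factorial : ℂ)) := by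
  rw [isAlgebraic_iff_isIntegral] at hx ⊢
  have h2 : IsIntegral ℚ ((k.factorial : ℂ)⁻¹) := by
    have : ((k.factorial : ℂ))⁻¹ = algebraMap ℚ ℂ ((k.factorial : ℚ))⁻¹ := by
      push_cast
      simp
    rw [this]
    exact isIntegral_algebraMap
  simpa [div_eq_mul_inv] using hx.mul h2

lemma aux_reduce (f : ℂ → ℂ) (Q : MvPolynomial (Fin 2) ℂ) (hQ0 : Q ≠ 0)
    (hQz : ∀ z : ℂ, MvPolynomial.eval ![z, f z] Q = 0) :
    ∃ B : Polynomial (Polynomial ℂ), B ≠ 0 ∧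
      ∀ z : ℂ, Polynomial.eval (f z) (B.map (Polynomial.evalRingHom z)) = 0 := by
  classical
  set Φ : MvPolynomial (Fin 1) ℂ ≃ₐ[ℂ] Polynomial ℂ :=
    (MvPolynomial.renameEquiv ℂ (Equiv.equivPUnit.{1,1} (Fin 1))).trans (MvPolynomial.pUnitAlgEquiv ℂ)
    with hΦ
  have hΦX : Φ (MvPolynomial.X 0) = Polynomial.X := by
    simp [hΦ, MvPolynomial.pUnitAlgEquiv]
  have hcomp : ∀ z : ℂ, (Polynomial.evalRingHom z).comp
      (Φ : MvPolynomial (Fin 1) ℂ →+* Polynomial ℂ) = MvPolynomial.eval ![z] := by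
    intro z
    apply MvPolynomial.ringHom_ext
    · intro r
      have hr : (MvPolynomial.C r : MvPolynomial (Fin 1) ℂ) = algebraMap ℂ _ r := rfl
      have h2 : (Φ : MvPolynomial (Fin 1) ℂ →+* Polynomial ℂ) (MvPolynomial.C r) =
          Polynomial.C r := by
        show Φ (MvPolynomial.C r) = Polynomial.C r
        rw [hr, AlgEquiv.commutes]
        rfl
      rw [RingHom.comp_apply, h2]
      simp
    · intro i
      fin_cases i
      simp [hΦX]
  set Q' : MvPolynomial (Fin 2) ℂ := MvPolynomial.rename (Equiv.swap (0 : Fin 2) 1) Q with hQ'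
  have hQ'0 : Q' ≠ 0 := by
    intro h
    exact hQ0 (MvPolynomial.rename_injective _ (Equiv.swap (0 : Fin 2) 1).injective
      (by simpa using h))
  set T : Polynomial (MvPolynomial (Fin 1) ℂ) := MvPolynomial.finSuccEquiv ℂ 1 Q' with hT
  have hT0 : T ≠ 0 := by
    intro h
    exact hQ'0 ((MvPolynomial.finSuccEquiv ℂ 1).injective (h.trans (map_zero _).symm))
  refine ⟨T.map (Φ : MvPolynomial (Fin 1) ℂ →+* Polynomial ℂ), ?_, ?_⟩
  · intro h
    exact hT0 ((Polynomial.map_eq_zero_iff Φ.injective).mp h)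
  · intro z
    have h1 : MvPolynomial.eval (Fin.cons (f z) ![z] : Fin 2 → ℂ) Q' =
        MvPolynomial.eval ![z, f z] Q := by
      rw [hQ', MvPolynomial.eval_rename]
      have hfun : (Fin.cons (f z) ![z] ∘ ⇑(Equiv.swap (0 : Fin 2) 1)) = ![z, f z] := by
        funext i
        fin_cases i <;> simp [Equiv.swap_apply_left, Equiv.swap_apply_right]
      rw [hfun]
    have h2 := MvPolynomial.eval_eq_eval_mv_eval' ![z] (f z) Q'
    rw [h1, hQz z] at h2
    rw [Polynomial.map_map, hcomp z]
    rw [← hT] at h2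
    exact h2.symm

/-- `f` is an E-function with coefficient sequence `a` of algebraic numbers:
`f z = ∑ aₙ/n! zⁿ` everywhere, `f` satisfies a nontrivial linear ODE over `ℚ̄[z]`,
the conjugates of the `aₖ` (k ≤ n) are bounded by `Cⁿ`, and there are common
denominators `d ≤ Cⁿ` for `a₀, …, aₙ`. -/
def IsEFunctionWith (f : ℂ → ℂ) (a : ℕ → ℂ) : Prop :=
  (∀ n, IsAlgebraic ℚ (a n)) ∧
  (∀ z : ℂ, HasSum (fun n : ℕ => a n / (n.factorial : ℂ) * z ^ n) (f z)) ∧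
  (∃ (m : ℕ) (p : ℕ → Polynomial ℂ),
    (∀ j k, IsAlgebraic ℚ ((p j).coeff k)) ∧
    (∃ j ≤ m, p j ≠ 0) ∧
    (∀ z : ℂ, ∑ j ∈ Finset.range (m + 1), (p j).eval z * iteratedDeriv j f z = 0)) ∧
  (∃ C : ℝ, 0 < C ∧
    (∀ n : ℕ, 1 ≤ n → ∀ k ≤ n, ∀ z : ℂ,
      (Polynomial.aeval z) (minpoly ℚ (a k)) = 0 → ‖z‖ ≤ C ^ n) ∧
    (∀ n : ℕ, 1 ≤ n → ∃ d : ℕ, 0 < d ∧ (d : ℝ) ≤ C ^ n ∧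
      ∀ k ≤ n, IsIntegral ℤ ((d : ℂ) * a k)))

/-- `f` is an E-function. -/
def IsEFunction (f : ℂ → ℂ) : Prop :=
  ∃ a : ℕ → ℂ, IsEFunctionWith f a

/-- An E-function is either a polynomial with coefficients in `ℚ̄` or transcendental
over `ℂ(z)`. -/
theorem E_function_polynomial_or_transcendental (f : ℂ → ℂ) (hf : IsEFunction f) :
    (∃ P : Polynomial ℂ, (∀ k, IsAlgebraic ℚ (P.coeff k)) ∧ ∀ z : ℂ, f z = P.eval z) ∨
    (¬ ∃ Q : MvPolynomial (Fin 2) ℂ, Q ≠ 0 ∧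
      ∀ z : ℂ, MvPolynomial.eval ![z, f z] Q = 0) := by
  obtain ⟨a, ha, hsum0, -, -⟩ := hf
  set c : ℕ → ℂ := fun n => a n / (n.factorial : ℂ) with hc
  have hsum : ∀ z : ℂ, HasSum (fun n : ℕ => c n * z ^ n) (f z) := hsum0
  by_cases hQ : ∃ Q : MvPolynomial (Fin 2) ℂ, Q ≠ 0 ∧
      ∀ z : ℂ, MvPolynomial.eval ![z, f z] Q = 0
  swap
  · right; exact hQ
  left
  obtain ⟨Q, hQ0, hQz⟩ := hQ
  obtain ⟨B, hB0, hkey⟩ := aux_reduce f Q hQ0 hQz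
  set d := B.natDegree with hd
  have heval : ∀ z : ℂ, ∑ i ∈ Finset.range (d + 1), (B.coeff i).eval z * (f z) ^ i = 0 := by
    intro z
    have h := hkey z
    rw [Polynomial.eval_map, Polynomial.eval₂_eq_sum_range] at h
    simpa using h
  have hqd : B.coeff d ≠ 0 := by
    rw [hd, ← Polynomial.leadingCoeff]
    exact Polynomial.leadingCoeff_ne_zero.mpr hB0
  rcases Nat.eq_zero_or_pos d with hd0 | hd1
  · exfalso
    apply hqd
    rw [hd0]
    apply Polynomial.funext
    intro z
    have h := heval z
    rw [hd0] at h
    simpa using h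
  -- main case : degree in Y at least 1
  obtain ⟨R₁, cβ, hR₁, hcβ, hlow⟩ := aux_eval_lower (B.coeff d) hqd
  set S : ℕ → ℝ := fun i =>
    ∑ j ∈ Finset.range ((B.coeff i).natDegree + 1), Complex.abs ((B.coeff i).coeff j) with hS
  set N := Finset.sup (Finset.range d) (fun i => (B.coeff i).natDegree) with hN
  set Ssum := ∑ i ∈ Finset.range d, S i with hSsum
  have hSi0 : ∀ i, 0 ≤ S i := fun i =>
    Finset.sum_nonneg fun _ _ => AbsoluteValue.nonneg _ _
  have hSsum0 : 0 ≤ Ssum := Finset.sum_nonneg fun i _ => hSi0 i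
  set A := 1 + Ssum / cβ with hA
  have hA0 : 0 ≤ A := by
    rw [hA]
    positivity
  have hbound : ∀ z : ℂ, R₁ ≤ Complex.abs z → Complex.abs (f z) ≤ A * Complex.abs z ^ N := by
    intro z hz
    have hz1 : 1 ≤ Complex.abs z := le_trans hR₁ hz
    have hqdz : cβ ≤ Complex.abs ((B.coeff d).eval z) := hlow z hz
    have hqdz0 : (B.coeff d).eval z ≠ 0 := by
      intro h
      rw [h] at hqdz
      simp at hqdz
      linarith
    have h1 := aux_root_bound hd1 (fun i => (B.coeff i).eval z) (f z) hqdz0 (heval z)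
    have hnum : ∑ i ∈ Finset.range d, Complex.abs ((B.coeff i).eval z)
        ≤ Ssum * Complex.abs z ^ N := by
      rw [hSsum, Finset.sum_mul]
      refine Finset.sum_le_sum fun i hi => ?_
      refine (aux_eval_upper _ hz1).trans ?_
      exact mul_le_mul_of_nonneg_left
        (pow_le_pow_right₀ hz1 (Finset.le_sup (f := fun i => (B.coeff i).natDegree) hi)) (hSi0 i)
    have hdiv : (∑ i ∈ Finset.range d, Complex.abs ((B.coeff i).eval z))
        / Complex.abs ((B.coeff d).eval z) ≤ (Ssum * Complex.abs z ^ N) / cβ :=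
      div_le_div₀ (mul_nonneg hSsum0 (pow_nonneg (AbsoluteValue.nonneg _ _) N)) hnum hcβ hqdz
    have hpow1 : (1 : ℝ) ≤ Complex.abs z ^ N := one_le_pow₀ hz1
    calc Complex.abs (f z)
        ≤ 1 + (∑ i ∈ Finset.range d, Complex.abs ((B.coeff i).eval z))
            / Complex.abs ((B.coeff d).eval z) := h1
      _ ≤ 1 + (Ssum * Complex.abs z ^ N) / cβ := by linarith
      _ = 1 + (Ssum / cβ) * Complex.abs z ^ N := by ring
      _ ≤ A * Complex.abs z ^ N := by
          rw [hA]
          have h2 : 0 ≤ Ssum / cβ := div_nonneg hSsum0 hcβ.le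
          nlinarith
  have hvanish := aux_growth_poly f c hsum N A R₁ hR₁ hA0 hbound
  refine ⟨∑ n ∈ Finset.range (N + 1), Polynomial.C (c n) * Polynomial.X ^ n, ?_,
    aux_poly_case f c hsum N hvanish⟩
  intro k
  have hcoeff : (∑ n ∈ Finset.range (N + 1),
      Polynomial.C (c n) * Polynomial.X ^ n).coeff k =
      if k ∈ Finset.range (N + 1) then c k else 0 := by
    rw [Polynomial.finset_sum_coeff]
    rw [Finset.sum_congr rfl (fun n _ => ?_), Finset.sum_ite_eq' (Finset.range (N + 1)) k
      (fun n => c n)]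
    rw [Polynomial.coeff_C_mul, Polynomial.coeff_X_pow]
    simp [eq_comm]
  rw [hcoeff]
  split
  · exact aux_coeff_alg k (a k) (ha k)
  · exact isAlgebraic_zero
end
end
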